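/- Let F := { σ : σ is a density matrix on ℂ² with Re Tr(σ_z σ) ≤ 0 }, where σ_z = diag(1, −1) (the closed lower hemisphere of the Bloch ball, which equals the convex hull of the pure states cos(θ/2)|0⟩ + e^{iφ} sin(θ/2)|1⟩ with θ ∈ [π/2, 3π/2]). Let U_μ := exp(−iμσ_y/2) with σ_y = [[0, −i], [i, 0]], M₀ := diag(1, 1/2), and for a density matrix σ set p_σ(μ) := Re Tr( M₀ U_μ σ U_μ* ). Then for every σ ∈ F one has 0 < p_σ(0) < 1 and p_σ'(0)² / ( p_σ(0)(1 − p_σ(0)) ) ≤ 1/3, with equality for σ = |+⟩⟨+| where |+⟩ = (|0⟩+|1⟩)/√2; moreover, for every θ ∈ (0, π/2), the pure state ρ_θ = |θ⟩⟨θ| with |θ⟩ = cos(θ/2)|0⟩ + sin(θ/2)|1⟩ satisfies ρ_θ ∉ F and p_{ρ_θ}'(0)² / ( p_{ρ_θ}(0)(1 − p_{ρ_θ}(0)) ) = 2cos²(θ/2)/(3 + cos θ) > 1/3. -/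

import Mathlib

open Matrix
open scoped ComplexOrder

noncomputable section

/-- A density matrix on `ℂ²`. -/
def IsDensityMatrix (ρ : Matrix (Fin 2) (Fin 2) ℂ) : Prop :=
  ρ.PosSemidef ∧ ρ.trace = 1

/-- The Pauli matrix `σ_y`. -/
def sigmaY : Matrix (Fin 2) (Fin 2) ℂ := !![0, -Complex.I; Complex.I, 0]

/-- The Pauli matrix `σ_z`. -/
def sigmaZ : Matrix (Fin 2) (Fin 2) ℂ := !![1, 0; 0, -1]

/-- The rotation `U_μ = exp(−iμσ_y/2)`. -/
def Uy (μ : ℝ) : Matrix (Fin 2) (Fin 2) ℂ :=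
  NormedSpace.exp ((-(Complex.I * (μ : ℂ)) / 2) • sigmaY)

/-- The state `|θ⟩ = cos(θ/2)|0⟩ + sin(θ/2)|1⟩`. -/
def ket (θ : ℝ) : Fin 2 → ℂ := ![(Real.cos (θ / 2) : ℂ), (Real.sin (θ / 2) : ℂ)]

/-- The projection `|θ⟩⟨θ|`. -/
def projKet (θ : ℝ) : Matrix (Fin 2) (Fin 2) ℂ := vecMulVec (ket θ) (star (ket θ))

/-- The POVM element `M₀ = diag(1, 1/2)`. -/
def M0 : Matrix (Fin 2) (Fin 2) ℂ := !![1, 0; 0, (1 / 2 : ℂ)]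

/-- The outcome probability `p_σ(μ) = Re Tr(M₀ U_μ σ U_μ*)`. -/
def pOf (σ : Matrix (Fin 2) (Fin 2) ℂ) (μ : ℝ) : ℝ :=
  ((M0 * (Uy μ * σ * (Uy μ)ᴴ)).trace).re

/-- The lower hemisphere of the Bloch ball: density matrices with `Re Tr(σ_z σ) ≤ 0`. -/
def lowerHemisphere : Set (Matrix (Fin 2) (Fin 2) ℂ) :=
  { σ | IsDensityMatrix σ ∧ ((sigmaZ * σ).trace).re ≤ 0 }

/- ### Auxiliary machinery -/

attribute [local instance] Matrix.linftyOpNormedRing Matrix.linftyOpNormedAlgebra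

/-- The ring embedding of `ℂ` into `2×2` complex matrices through rotation-type matrices. -/
def phiC : ℂ →+* Matrix (Fin 2) (Fin 2) ℂ where
  toFun z := !![(z.re : ℂ), -(z.im : ℂ); (z.im : ℂ), (z.re : ℂ)]
  map_one' := by ext i j; fin_cases i <;> fin_cases j <;> simp
  map_zero' := by ext i j; fin_cases i <;> fin_cases j <;> simp
  map_mul' z w := by
    ext i j
    fin_cases i <;> fin_cases j <;>
      simp [Matrix.mul_apply, Fin.sum_univ_two, Complex.mul_re, Complex.mul_im] <;> push_cast <;> ring
  map_add' z w := by
    ext i j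
    fin_cases i <;> fin_cases j <;> simp <;> push_cast <;> ring

lemma phiC_continuous : Continuous phiC := by
  apply continuous_matrix
  intro i j
  fin_cases i <;> fin_cases j <;>
    simp [phiC] <;> fun_prop

lemma Uy_eq (μ : ℝ) : Uy μ =
    !![(Real.cos (μ/2) : ℂ), -(Real.sin (μ/2) : ℂ);
       (Real.sin (μ/2) : ℂ), (Real.cos (μ/2) : ℂ)] := by
  have h1 : ((-(Complex.I * (μ : ℂ)) / 2) • sigmaY) = phiC ((μ/2 : ℝ) * Complex.I) := by
    ext i j
    fin_cases i <;> fin_cases j <;>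
      simp [sigmaY, phiC, Complex.mul_re, Complex.mul_im, Complex.ext_iff] <;> push_cast <;>
        ring_nf <;> simp [Complex.ext_iff]
  rw [Uy, h1]
  refine (NormedSpace.map_exp phiC phiC_continuous _).symm.trans ?_
  rw [← Complex.exp_eq_exp_ℂ]
  have key : Complex.exp ((μ/2 : ℝ) * Complex.I)
      = (Real.cos (μ/2) : ℂ) + (Real.sin (μ/2) : ℂ) * Complex.I := by
    rw [Complex.exp_mul_I, ← Complex.ofReal_cos, ← Complex.ofReal_sin]
  rw [key]
  ext i j
  fin_cases i <;> fin_cases j <;>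
    simp [phiC, ← Complex.ofReal_div, Complex.cos_ofReal_im, Complex.sin_ofReal_im,
      Complex.cos_ofReal_re, Complex.sin_ofReal_re, ← Complex.ofReal_cos, ← Complex.ofReal_sin]

lemma pOf_eq (σ : Matrix (Fin 2) (Fin 2) ℂ) (μ : ℝ) :
    pOf σ μ = (3 * ((σ 0 0).re + (σ 1 1).re)
      + (((σ 0 0).re - (σ 1 1).re) * Real.cos μ
        - ((σ 0 1).re + (σ 1 0).re) * Real.sin μ)) / 4 := by
  have hμ : 2 * (μ/2) = μ := by ring
  have hc : Real.cos μ = Real.cos (μ/2)^2 - Real.sin (μ/2)^2 := by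
    have := Real.cos_two_mul (μ/2)
    have h2 := Real.sin_sq_add_cos_sq (μ/2)
    rw [hμ] at this; nlinarith
  have hs : Real.sin μ = 2 * Real.sin (μ/2) * Real.cos (μ/2) := by
    have := Real.sin_two_mul (μ/2); rw [hμ] at this; exact this
  have hcs := Real.sin_sq_add_cos_sq (μ/2)
  rw [pOf, Uy_eq]
  simp only [M0, Matrix.trace_fin_two, Matrix.mul_apply, Fin.sum_univ_two,
    Matrix.conjTranspose_apply, Matrix.cons_val', Matrix.cons_val_zero, Matrix.cons_val_one,
    Matrix.head_cons, Matrix.head_fin_const, Matrix.empty_val', Matrix.cons_val_fin_one,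
    Matrix.of_apply, RCLike.star_def, Complex.conj_ofReal, map_neg, Complex.add_re,
    Complex.mul_re, Complex.mul_im, Complex.ofReal_re, Complex.ofReal_im, Complex.neg_re,
    Complex.neg_im, Complex.one_re, Complex.one_im, Complex.zero_re, Complex.zero_im]
  norm_num
  rw [hc, hs]
  set c := Real.cos (μ/2)
  set s := Real.sin (μ/2)
  linear_combination (3*((σ 0 0).re + (σ 1 1).re)/4) * hcs

lemma hasDerivAt_pOf (σ : Matrix (Fin 2) (Fin 2) ℂ) :
    HasDerivAt (pOf σ) (-(((σ 0 1).re + (σ 1 0).re)/4)) 0 := by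
  have hfun : pOf σ = fun μ => (3 * ((σ 0 0).re + (σ 1 1).re)
      + (((σ 0 0).re - (σ 1 1).re) * Real.cos μ
        - ((σ 0 1).re + (σ 1 0).re) * Real.sin μ)) / 4 := funext fun μ => pOf_eq σ μ
  rw [hfun]
  have h1 : HasDerivAt (fun μ : ℝ => 3 * ((σ 0 0).re + (σ 1 1).re)
      + (((σ 0 0).re - (σ 1 1).re) * Real.cos μ
        - ((σ 0 1).re + (σ 1 0).re) * Real.sin μ))
      (((σ 0 0).re - (σ 1 1).re) * (-Real.sin 0)
        - ((σ 0 1).re + (σ 1 0).re) * Real.cos 0) 0 :=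
    (((Real.hasDerivAt_cos 0).const_mul _).sub
      ((Real.hasDerivAt_sin 0).const_mul _)).const_add _
  have h2 := h1.div_const 4
  simp only [Real.sin_zero, Real.cos_zero] at h2
  exact h2.congr_deriv (by ring)

lemma deriv_pOf (σ : Matrix (Fin 2) (Fin 2) ℂ) :
    deriv (pOf σ) 0 = -(((σ 0 1).re + (σ 1 0).re)/4) :=
  (hasDerivAt_pOf σ).deriv

lemma pOf_zero (σ : Matrix (Fin 2) (Fin 2) ℂ) :
    pOf σ 0 = (3 * ((σ 0 0).re + (σ 1 1).re) + ((σ 0 0).re - (σ 1 1).re)) / 4 := by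
  rw [pOf_eq]; simp

lemma sigmaZ_trace_re (σ : Matrix (Fin 2) (Fin 2) ℂ) :
    ((sigmaZ * σ).trace).re = (σ 0 0).re - (σ 1 1).re := by
  simp only [sigmaZ, Matrix.trace_fin_two, Matrix.mul_apply, Fin.sum_univ_two,
    Matrix.cons_val', Matrix.cons_val_zero, Matrix.cons_val_one, Matrix.head_cons,
    Matrix.head_fin_const, Matrix.empty_val', Matrix.cons_val_fin_one, Matrix.of_apply,
    Complex.add_re, Complex.mul_re, Complex.one_re, Complex.one_im, Complex.zero_re,
    Complex.zero_im, Complex.neg_re, Complex.neg_im]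
  ring

lemma quadForm_nonneg {σ : Matrix (Fin 2) (Fin 2) ℂ} (hσ : σ.PosSemidef) (u v : ℝ) :
    0 ≤ (σ 0 0).re * u^2 + ((σ 0 1).re + (σ 1 0).re) * (u*v) + (σ 1 1).re * v^2 := by
  have h := hσ.re_dotProduct_nonneg ![(u : ℂ), (v : ℂ)]
  simp only [dotProduct, Matrix.mulVec, Fin.sum_univ_two, Pi.star_apply,
    Matrix.cons_val_zero, Matrix.cons_val_one, Matrix.head_cons, RCLike.star_def,
    Complex.conj_ofReal, dotProduct, RCLike.re_to_complex, Complex.add_re, Complex.mul_re,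
    Complex.ofReal_re, Complex.ofReal_im] at h
  nlinarith [h]

lemma trace_re_eq {σ : Matrix (Fin 2) (Fin 2) ℂ} (h : σ.trace = 1) :
    (σ 0 0).re + (σ 1 1).re = 1 := by
  have := congrArg Complex.re h
  rw [Matrix.trace_fin_two] at this
  simpa using this

lemma projKet_re (θ : ℝ) :
    ((projKet θ) 0 0).re = Real.cos (θ/2) * Real.cos (θ/2) ∧
    ((projKet θ) 1 1).re = Real.sin (θ/2) * Real.sin (θ/2) ∧
    ((projKet θ) 0 1).re = Real.cos (θ/2) * Real.sin (θ/2) ∧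
    ((projKet θ) 1 0).re = Real.sin (θ/2) * Real.cos (θ/2) := by
  refine ⟨?_, ?_, ?_, ?_⟩ <;>
    · simp only [projKet, ket, Matrix.vecMulVec_apply, Pi.star_apply, Matrix.cons_val_zero,
        Matrix.cons_val_one, Matrix.head_cons, RCLike.star_def, Complex.conj_ofReal,
        Complex.mul_re, Complex.ofReal_re, Complex.ofReal_im]
      ring

lemma fisher_aux (X z : ℝ) (h1 : X^2 ≤ 1 - z^2) (h2 : z ≤ 0) :
    (-(X/4))^2 ≤ 1/3 * ((3+z)/4 * (1-(3+z)/4)) := by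
  nlinarith [h1, mul_nonneg (neg_nonneg.2 h2) (by nlinarith [sq_nonneg z] : (0:ℝ) ≤ 1 - z)]

set_option maxHeartbeats 1600000 in
/-- on the lower-hemisphere free set, the binary classical Fisher
information at `μ = 0` of the rotation model is at most `1/3`, with equality at `|+⟩⟨+|`,
while every pure state `|θ⟩⟨θ|` with `θ ∈ (0, π/2)` lies outside the free set and strictly
exceeds `1/3`. -/
theorem lower_hemisphere_example :
    (∀ σ ∈ lowerHemisphere,
        0 < pOf σ 0 ∧ pOf σ 0 < 1 ∧
          (deriv (pOf σ) 0) ^ 2 / (pOf σ 0 * (1 - pOf σ 0)) ≤ 1 / 3) ∧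
      (deriv (pOf (projKet (Real.pi / 2))) 0) ^ 2 /
          (pOf (projKet (Real.pi / 2)) 0 * (1 - pOf (projKet (Real.pi / 2)) 0)) = 1 / 3 ∧
      ∀ θ ∈ Set.Ioo (0 : ℝ) (Real.pi / 2),
        projKet θ ∉ lowerHemisphere ∧
          (deriv (pOf (projKet θ)) 0) ^ 2 /
              (pOf (projKet θ) 0 * (1 - pOf (projKet θ) 0)) =
            2 * Real.cos (θ / 2) ^ 2 / (3 + Real.cos θ) ∧
          1 / 3 < (deriv (pOf (projKet θ)) 0) ^ 2 /
              (pOf (projKet θ) 0 * (1 - pOf (projKet θ) 0)) := by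
  refine ⟨?_, ?_, ?_⟩
  · -- lower hemisphere bound
    rintro σ ⟨⟨hpsd, htr⟩, hz⟩
    set a := (σ 0 0).re with ha
    set d := (σ 1 1).re with hd
    set X := (σ 0 1).re + (σ 1 0).re with hX
    have had : a + d = 1 := trace_re_eq htr
    have hz' : a - d ≤ 0 := by rw [sigmaZ_trace_re] at hz; exact hz
    have hQ := quadForm_nonneg hpsd
    have ha0 : 0 ≤ a := by have := hQ 1 0; simpa using this
    have hd0 : 0 ≤ d := by have := hQ 0 1; simpa using this
    have hdhalf : (1:ℝ)/2 ≤ d := by linarith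
    have hX2 : X^2 ≤ 4*a*d := by
      have h := hQ (2*d) (-X)
      rw [← ha, ← hd, ← hX] at h
      nlinarith [h, hdhalf]
    have hp0 : pOf σ 0 = (3*(a+d) + (a - d))/4 := by rw [pOf_zero]
    have hderiv : deriv (pOf σ) 0 = -(X/4) := deriv_pOf σ
    refine ⟨by rw [hp0]; linarith, by rw [hp0]; linarith, ?_⟩
    rw [hp0, hderiv]
    have hpos : (0:ℝ) < (3*(a+d) + (a - d))/4 * (1 - (3*(a+d) + (a - d))/4) := by
      have h1 : (0:ℝ) < (3*(a+d) + (a - d))/4 := by linarith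
      have h2 : (3*(a+d) + (a - d))/4 < 1 := by linarith
      nlinarith
    have hgoal : (3*(a+d) + (a-d))/4 = (3 + (a-d))/4 := by rw [had]; norm_num
    rw [hgoal] at hpos ⊢
    rw [div_le_iff₀ hpos]
    have h4ad : 4*a*d = 1 - (a-d)^2 := by linear_combination (a+d+1)*had
    have hAd : X^2 ≤ 1 - (a-d)^2 := by linarith
    exact fisher_aux X (a-d) hAd hz'
  · -- equality at θ = π/2
    have hc : Real.cos ((Real.pi/2)/2) = Real.sqrt 2 / 2 := by
      rw [show (Real.pi/2)/2 = Real.pi/4 by ring, Real.cos_pi_div_four]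
    have hs : Real.sin ((Real.pi/2)/2) = Real.sqrt 2 / 2 := by
      rw [show (Real.pi/2)/2 = Real.pi/4 by ring, Real.sin_pi_div_four]
    have h2 : Real.sqrt 2 * Real.sqrt 2 = 2 := Real.mul_self_sqrt (by norm_num)
    have hderiv : deriv (pOf (projKet (Real.pi/2))) 0 = -(1/4) := by
      obtain ⟨e1, e2, e3, e4⟩ := projKet_re (Real.pi/2)
      rw [deriv_pOf, e3, e4, hc, hs]
      rw [show Real.sqrt 2 / 2 * (Real.sqrt 2 / 2) = (Real.sqrt 2 * Real.sqrt 2)/4 by ring, h2]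
      norm_num
    have hp0 : pOf (projKet (Real.pi/2)) 0 = 3/4 := by
      obtain ⟨e1, e2, e3, e4⟩ := projKet_re (Real.pi/2)
      rw [pOf_zero, e1, e2, hc, hs]
      rw [show Real.sqrt 2 / 2 * (Real.sqrt 2 / 2) = (Real.sqrt 2 * Real.sqrt 2)/4 by ring, h2]
      norm_num
    rw [hderiv, hp0]
    norm_num
  · -- strict violation for θ ∈ (0, π/2)
    rintro θ ⟨hθ0, hθπ⟩
    have hpi := Real.pi_pos
    set c := Real.cos (θ/2) with hcdef
    set s := Real.sin (θ/2) with hsdef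
    have hcs : s^2 + c^2 = 1 := Real.sin_sq_add_cos_sq (θ/2)
    have hcosθ : Real.cos θ = 2*c^2 - 1 := by
      have := Real.cos_two_mul (θ/2)
      rw [show 2*(θ/2) = θ by ring] at this; exact this
    have hcospos : 0 < Real.cos θ :=
      Real.cos_pos_of_mem_Ioo ⟨by linarith, hθπ⟩
    have hspos : 0 < s := Real.sin_pos_of_pos_of_lt_pi (by linarith) (by linarith)
    obtain ⟨e1, e2, e3, e4⟩ := projKet_re θ
    have hderiv : deriv (pOf (projKet θ)) 0 = -((c*s + s*c)/4) := by
      rw [deriv_pOf, e3, e4]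
    have hp0 : pOf (projKet θ) 0 = (3*(c*c + s*s) + (c*c - s*s))/4 := by
      rw [pOf_zero, e1, e2]
    have hp0v : pOf (projKet θ) 0 = (1 + c^2)/2 := by rw [hp0]; nlinarith [hcs]
    have hzre : ((sigmaZ * projKet θ).trace).re = Real.cos θ := by
      rw [sigmaZ_trace_re, e1, e2]
      nlinarith [hcs, hcosθ]
    have hnotin : projKet θ ∉ lowerHemisphere := by
      rintro ⟨-, hle⟩
      rw [hzre] at hle
      linarith
    have hc2lt : c^2 < 1 := by nlinarith [mul_pos hspos hspos, hcs]
    have hfish : (deriv (pOf (projKet θ)) 0) ^ 2 /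
        (pOf (projKet θ) 0 * (1 - pOf (projKet θ) 0)) =
        2 * c ^ 2 / (3 + Real.cos θ) := by
      rw [hderiv, hp0v, hcosθ]
      have hs2 : s^2 = 1 - c^2 := by linarith
      have hc2pos : (0:ℝ) < 1 - c^2 := by nlinarith [mul_pos hspos hspos]
      have hL : (-((c*s + s*c)/4))^2 = c^2*(1-c^2)/4 := by
        linear_combination (c^2/4) * hs2
      have hDen : (1 + c^2)/2 * (1 - (1 + c^2)/2) = (1+c^2)*(1-c^2)/4 := by ring
      have h32 : (3:ℝ) + (2*c^2 - 1) = 2*(1+c^2) := by ring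
      rw [hL, hDen, h32]
      rw [div_eq_div_iff (by positivity) (by positivity)]
      ring
    refine ⟨hnotin, hfish, ?_⟩
    rw [hfish, hcosθ]
    rw [lt_div_iff₀ (by nlinarith : (0:ℝ) < 3 + (2*c^2 - 1))]
    nlinarith [hcospos, hcosθ]

end
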